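/- arXiv:bayes-an/9609001 — 2 statements merged into one kernel-verified Lean document; each statement's English description precedes it below -/
import Mathlib

section
/- Let B, C, D be random vectors (of dimensions m, p, n respectively) and let W be the Moore–Penrose inverse of Var(D). Then the adjusted covariance satisfies Cov_D(B,C) = Cov(B,C) − Cov(B,D)·W·Cov(D,C). -/
open MeasureTheory Matrix

variable {Ω : Type*}

/-- The covariance matrix of two random vectors `B` (dimension `m`) and `D` (dimension `n`):
the `(i,j)` entry is `E[Bᵢ·Dⱼ] − E[Bᵢ]·E[Dⱼ]`. -/
noncomputable def cov [MeasurableSpace Ω] (μ : Measure Ω) {m n : ℕ}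
    (B : Fin m → Ω → ℝ) (D : Fin n → Ω → ℝ) : Matrix (Fin m) (Fin n) ℝ :=
  Matrix.of fun i j =>
    (∫ ω, B i ω * D j ω ∂μ) - (∫ ω, B i ω ∂μ) * (∫ ω, D j ω ∂μ)

/-- `W` is a Moore–Penrose inverse of `V`. -/
def IsMoorePenrose {m n : ℕ} (V : Matrix (Fin m) (Fin n) ℝ)
    (W : Matrix (Fin n) (Fin m) ℝ) : Prop :=
  V * W * V = V ∧ W * V * W = W ∧ (V * W)ᵀ = V * W ∧ (W * V)ᵀ = W * V

/-- The adjusted expectation `E_D(B)` (computed with the matrix `W`, intended to be the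
Moore–Penrose inverse of `Var(D)`): the `i`-th component is
`E[Bᵢ] + Σ_j (Cov(B,D)·W)_{ij}·(Dⱼ − E[Dⱼ])`. -/
noncomputable def adjExp [MeasurableSpace Ω] (μ : Measure Ω) {m n : ℕ}
    (B : Fin m → Ω → ℝ) (D : Fin n → Ω → ℝ)
    (W : Matrix (Fin n) (Fin n) ℝ) : Fin m → Ω → ℝ :=
  fun i ω => (∫ ω', B i ω' ∂μ) + ∑ j, (cov μ B D * W) i j * (D j ω - ∫ ω', D j ω' ∂μ)

/-- The adjusted covariance `Cov_D(B,C) = Cov(B − E_D(B), C − E_D(C))`. -/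
noncomputable def adjCov [MeasurableSpace Ω] (μ : Measure Ω) {m p n : ℕ}
    (B : Fin m → Ω → ℝ) (C : Fin p → Ω → ℝ) (D : Fin n → Ω → ℝ)
    (W : Matrix (Fin n) (Fin n) ℝ) : Matrix (Fin m) (Fin p) ℝ :=
  cov μ (fun i ω => B i ω - adjExp μ B D W i ω) (fun j ω => C j ω - adjExp μ C D W j ω)

section Aux

variable [MeasurableSpace Ω] {μ : Measure Ω} [IsProbabilityMeasure μ]

private lemma mulInt {f g : Ω → ℝ} (hf : MemLp f 2 μ) (hg : MemLp g 2 μ) :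
    Integrable (fun ω => f ω * g ω) μ := by
  have h := (hg.smul hf (p := 2) (q := 2) (r := 1)).integrable le_rfl
  exact h

private lemma memCt {f : Ω → ℝ} (hf : MemLp f 2 μ) :
    MemLp (fun ω => f ω - ∫ ω', f ω' ∂μ) 2 μ :=
  hf.sub (memLp_const _)

private lemma intCt {f : Ω → ℝ} (hf : MemLp f 2 μ) :
    ∫ ω, (f ω - ∫ ω', f ω' ∂μ) ∂μ = 0 := by
  rw [integral_sub (hf.integrable one_le_two) (integrable_const _), integral_const]
  simp

private lemma centeredInt {f g : Ω → ℝ} (hf : MemLp f 2 μ) (hg : MemLp g 2 μ) :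
    ∫ ω, (f ω - ∫ ω', f ω' ∂μ) * (g ω - ∫ ω', g ω' ∂μ) ∂μ
      = (∫ ω, f ω * g ω ∂μ) - (∫ ω, f ω ∂μ) * (∫ ω, g ω ∂μ) := by
  set a := ∫ ω', f ω' ∂μ
  set b := ∫ ω', g ω' ∂μ
  have hpt : ∀ ω, (f ω - a) * (g ω - b) = f ω * g ω - a * g ω - b * f ω + a * b := by
    intro ω; ring
  simp_rw [hpt]
  have hfg := mulInt hf hg
  have h1 : Integrable (fun ω => f ω * g ω - a * g ω) μ :=
    hfg.sub ((hg.integrable one_le_two).const_mul a)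
  have h2 : Integrable (fun ω => f ω * g ω - a * g ω - b * f ω) μ :=
    h1.sub ((hf.integrable one_le_two).const_mul b)
  rw [integral_add h2 (integrable_const _), integral_sub h1
      ((hf.integrable one_le_two).const_mul b),
    integral_sub hfg ((hg.integrable one_le_two).const_mul a),
    integral_const_mul, integral_const_mul, integral_const]
  simp [a, b]
  ring

private lemma intLinZero {n : ℕ} {f : Ω → ℝ} {d : Fin n → Ω → ℝ} (p : Fin n → ℝ)
    (hf : MemLp f 2 μ) (hd : ∀ k, MemLp (d k) 2 μ)
    (hf0 : ∫ ω, f ω ∂μ = 0) (hd0 : ∀ k, ∫ ω, d k ω ∂μ = 0) :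
    ∫ ω, (f ω - ∑ k, p k * d k ω) ∂μ = 0 := by
  rw [integral_sub (hf.integrable one_le_two)
    (integrable_finset_sum _ fun k _ => ((hd k).integrable one_le_two).const_mul _),
    integral_finset_sum _ fun k _ => ((hd k).integrable one_le_two).const_mul _]
  simp_rw [integral_const_mul]
  simp [hf0, hd0]

private lemma expandInt {n : ℕ} {f g : Ω → ℝ} {d : Fin n → Ω → ℝ} (p q : Fin n → ℝ)
    (hf : MemLp f 2 μ) (hg : MemLp g 2 μ) (hd : ∀ k, MemLp (d k) 2 μ) :
    ∫ ω, (f ω - ∑ k, p k * d k ω) * (g ω - ∑ l, q l * d l ω) ∂μ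
      = (∫ ω, f ω * g ω ∂μ) - (∑ l, q l * ∫ ω, f ω * d l ω ∂μ)
        - (∑ k, p k * ∫ ω, d k ω * g ω ∂μ)
        + ∑ k, ∑ l, p k * q l * ∫ ω, d k ω * d l ω ∂μ := by
  have hpt : ∀ ω, (f ω - ∑ k, p k * d k ω) * (g ω - ∑ l, q l * d l ω)
      = f ω * g ω - (∑ l, q l * (f ω * d l ω)) - (∑ k, p k * (d k ω * g ω))
        + ∑ k, ∑ l, p k * q l * (d k ω * d l ω) := by
    intro ω
    have e1 : f ω * ∑ l, q l * d l ω = ∑ l, q l * (f ω * d l ω) := by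
      rw [Finset.mul_sum]; exact Finset.sum_congr rfl fun l _ => by ring
    have e2 : (∑ k, p k * d k ω) * g ω = ∑ k, p k * (d k ω * g ω) := by
      rw [Finset.sum_mul]; exact Finset.sum_congr rfl fun k _ => by ring
    have e3 : (∑ k, p k * d k ω) * (∑ l, q l * d l ω)
        = ∑ k, ∑ l, p k * q l * (d k ω * d l ω) := by
      rw [Finset.sum_mul]
      refine Finset.sum_congr rfl fun k _ => ?_
      rw [Finset.mul_sum]; exact Finset.sum_congr rfl fun l _ => by ring
    calc (f ω - ∑ k, p k * d k ω) * (g ω - ∑ l, q l * d l ω)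
        = f ω * g ω - f ω * (∑ l, q l * d l ω) - (∑ k, p k * d k ω) * g ω
          + (∑ k, p k * d k ω) * (∑ l, q l * d l ω) := by ring
      _ = _ := by rw [e1, e2, e3]
  simp_rw [hpt]
  have hA := mulInt hf hg
  have hBl : ∀ l : Fin n, Integrable (fun ω => q l * (f ω * d l ω)) μ :=
    fun l => (mulInt hf (hd l)).const_mul _
  have hCk : ∀ k : Fin n, Integrable (fun ω => p k * (d k ω * g ω)) μ :=
    fun k => (mulInt (hd k) hg).const_mul _
  have hEkl : ∀ (k l : Fin n), Integrable (fun ω => p k * q l * (d k ω * d l ω)) μ :=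
    fun k l => (mulInt (hd k) (hd l)).const_mul _
  have hB : Integrable (fun ω => ∑ l, q l * (f ω * d l ω)) μ :=
    integrable_finset_sum _ fun l _ => hBl l
  have hC : Integrable (fun ω => ∑ k, p k * (d k ω * g ω)) μ :=
    integrable_finset_sum _ fun k _ => hCk k
  have hEk : ∀ k : Fin n, Integrable (fun ω => ∑ l, p k * q l * (d k ω * d l ω)) μ :=
    fun k => integrable_finset_sum _ fun l _ => hEkl k l
  have hE : Integrable (fun ω => ∑ k, ∑ l, p k * q l * (d k ω * d l ω)) μ :=
    integrable_finset_sum _ fun k _ => hEk k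
  have h1 : Integrable (fun ω => f ω * g ω - ∑ l, q l * (f ω * d l ω)) μ := hA.sub hB
  have h2 : Integrable
      (fun ω => f ω * g ω - (∑ l, q l * (f ω * d l ω)) - ∑ k, p k * (d k ω * g ω)) μ :=
    h1.sub hC
  rw [integral_add h2 hE, integral_sub h1 hC, integral_sub hA hB,
    integral_finset_sum _ fun l _ => hBl l, integral_finset_sum _ fun k _ => hCk k,
    integral_finset_sum _ fun k _ => hEk k]
  simp_rw [integral_finset_sum _ fun l _ => hEkl _ l, integral_const_mul]

private lemma mp_unique {n : ℕ} {V W W' : Matrix (Fin n) (Fin n) ℝ}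
    (h : IsMoorePenrose V W) (h' : IsMoorePenrose V W') : W = W' := by
  obtain ⟨v1, w1, vw1, wv1⟩ := h
  obtain ⟨v2, w2, vw2, wv2⟩ := h'
  have t1 : V * W = (V * W') * (V * W) := by
    calc V * W = V * W' * V * W := by rw [v2]
    _ = (V * W') * (V * W) := by rw [Matrix.mul_assoc]
  have t3 : V * W' = (V * W) * (V * W') := by
    calc V * W' = V * W * V * W' := by rw [v1]
    _ = (V * W) * (V * W') := by rw [Matrix.mul_assoc]
  have t2 : V * W = (V * W) * (V * W') := by
    calc V * W = (V * W)ᵀ := vw1.symm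
    _ = ((V * W') * (V * W))ᵀ := by rw [← t1]
    _ = (V * W)ᵀ * (V * W')ᵀ := by rw [Matrix.transpose_mul]
    _ = (V * W) * (V * W') := by rw [vw1, vw2]
  have hVW : V * W = V * W' := t2.trans t3.symm
  have s1 : W' * V = (W' * V) * (W * V) := by
    calc W' * V = W' * (V * W * V) := by rw [v1]
    _ = (W' * V) * (W * V) := by
        rw [← Matrix.mul_assoc, ← Matrix.mul_assoc, Matrix.mul_assoc (W' * V)]
  have s3 : W * V = (W * V) * (W' * V) := by
    calc W * V = W * (V * W' * V) := by rw [v2]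
    _ = (W * V) * (W' * V) := by
        rw [← Matrix.mul_assoc, ← Matrix.mul_assoc, Matrix.mul_assoc (W * V)]
  have s2 : W' * V = (W * V) * (W' * V) := by
    calc W' * V = (W' * V)ᵀ := wv2.symm
    _ = ((W' * V) * (W * V))ᵀ := by rw [← s1]
    _ = (W * V)ᵀ * (W' * V)ᵀ := by rw [Matrix.transpose_mul]
    _ = (W * V) * (W' * V) := by rw [wv1, wv2]
  have hWV : W * V = W' * V := s3.trans s2.symm
  calc W = W * V * W := w1.symm
  _ = W * (V * W) := by rw [Matrix.mul_assoc]
  _ = W * (V * W') := by rw [hVW]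
  _ = (W * V) * W' := by rw [Matrix.mul_assoc]
  _ = (W' * V) * W' := by rw [hWV]
  _ = W' := w2

private lemma mp_symm {n : ℕ} {V W : Matrix (Fin n) (Fin n) ℝ} (hVs : Vᵀ = V)
    (h : IsMoorePenrose V W) : Wᵀ = W := by
  obtain ⟨v1, w1, vw1, wv1⟩ := h
  refine mp_unique ?_ ⟨v1, w1, vw1, wv1⟩
  refine ⟨?_, ?_, ?_, ?_⟩
  · conv_lhs => rw [← hVs]
    rw [← Matrix.transpose_mul, ← Matrix.transpose_mul, ← Matrix.mul_assoc, v1, hVs]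
  · conv_lhs => rw [← hVs]
    rw [← Matrix.transpose_mul, ← Matrix.transpose_mul, ← Matrix.mul_assoc, w1]
  · rw [← hVs, ← Matrix.transpose_mul, Matrix.transpose_transpose, wv1]
  · rw [← hVs, ← Matrix.transpose_mul, Matrix.transpose_transpose, vw1]

end Aux

/-- `Cov_D(B,C) = Cov(B,C) − Cov(B,D)·W·Cov(D,C)` where `W` is the
Moore–Penrose inverse of `Var(D)`. -/
theorem adjCov_eq_cov_sub [MeasurableSpace Ω] (μ : Measure Ω) [IsProbabilityMeasure μ]
    {m p n : ℕ} (B : Fin m → Ω → ℝ) (C : Fin p → Ω → ℝ) (D : Fin n → Ω → ℝ)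
    (hB : ∀ i, Measurable (B i) ∧ MemLp (B i) 2 μ)
    (hC : ∀ i, Measurable (C i) ∧ MemLp (C i) 2 μ)
    (hD : ∀ i, Measurable (D i) ∧ MemLp (D i) 2 μ)
    (W : Matrix (Fin n) (Fin n) ℝ) (hW : IsMoorePenrose (cov μ D D) W) :
    adjCov μ B C D W = cov μ B C - cov μ B D * W * cov μ D C := by
  set V := cov μ D D with hVdef
  set BD := cov μ B D with hBDdef
  set CD := cov μ C D with hCDdef
  set DC := cov μ D C with hDCdef
  have hVs : Vᵀ = V := by
    ext i j
    simp [hVdef, cov, Matrix.transpose_apply, mul_comm]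
  have hCDt : CDᵀ = DC := by
    ext i j
    simp [hCDdef, hDCdef, cov, Matrix.transpose_apply, mul_comm]
  have hWt : Wᵀ = W := mp_symm hVs hW
  have hWVW : W * V * W = W := hW.2.1
  have htr : (CD * W)ᵀ = W * DC := by
    rw [Matrix.transpose_mul, hWt, hCDt]
  ext i j
  -- abbreviations for the projection matrices
  set P := BD * W with hPdef
  set Q := CD * W with hQdef
  -- rewrite the random vectors in centered form
  have hXi : ∀ ω, B i ω - adjExp μ B D W i ω
      = (B i ω - ∫ ω', B i ω' ∂μ)
          - ∑ k, P i k * (D k ω - ∫ ω', D k ω' ∂μ) := by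
    intro ω; simp only [adjExp, hPdef, hBDdef]; ring
  have hYj : ∀ ω, C j ω - adjExp μ C D W j ω
      = (C j ω - ∫ ω', C j ω' ∂μ)
          - ∑ l, Q j l * (D l ω - ∫ ω', D l ω' ∂μ) := by
    intro ω; simp only [adjExp, hQdef, hCDdef]; ring
  have hint : ∫ ω, ((B i ω - ∫ ω', B i ω' ∂μ) - ∑ k, P i k * (D k ω - ∫ ω', D k ω' ∂μ))
        * ((C j ω - ∫ ω', C j ω' ∂μ) - ∑ l, Q j l * (D l ω - ∫ ω', D l ω' ∂μ)) ∂μ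
      = (∫ ω, (B i ω - ∫ ω', B i ω' ∂μ) * (C j ω - ∫ ω', C j ω' ∂μ) ∂μ)
        - (∑ l, Q j l * ∫ ω, (B i ω - ∫ ω', B i ω' ∂μ) * (D l ω - ∫ ω', D l ω' ∂μ) ∂μ)
        - (∑ k, P i k * ∫ ω, (D k ω - ∫ ω', D k ω' ∂μ) * (C j ω - ∫ ω', C j ω' ∂μ) ∂μ)
        + ∑ k, ∑ l, P i k * Q j l
            * ∫ ω, (D k ω - ∫ ω', D k ω' ∂μ) * (D l ω - ∫ ω', D l ω' ∂μ) ∂μ :=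
    expandInt (fun k => P i k) (fun l => Q j l) (memCt (hB i).2) (memCt (hC j).2)
      (fun k => memCt (hD k).2)
  have e0 : ∫ ω, (B i ω - ∫ ω', B i ω' ∂μ) * (C j ω - ∫ ω', C j ω' ∂μ) ∂μ
      = cov μ B C i j := by
    rw [centeredInt (hB i).2 (hC j).2]; rfl
  have e1 : ∀ l, ∫ ω, (B i ω - ∫ ω', B i ω' ∂μ) * (D l ω - ∫ ω', D l ω' ∂μ) ∂μ
      = BD i l := by
    intro l; rw [centeredInt (hB i).2 (hD l).2]; rfl
  have e2 : ∀ k, ∫ ω, (D k ω - ∫ ω', D k ω' ∂μ) * (C j ω - ∫ ω', C j ω' ∂μ) ∂μ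
      = DC k j := by
    intro k; rw [centeredInt (hD k).2 (hC j).2]; rfl
  have e3 : ∀ k l, ∫ ω, (D k ω - ∫ ω', D k ω' ∂μ) * (D l ω - ∫ ω', D l ω' ∂μ) ∂μ
      = V k l := by
    intro k l; rw [centeredInt (hD k).2 (hD l).2]; rfl
  have hX0 : ∫ ω, ((B i ω - ∫ ω', B i ω' ∂μ)
      - ∑ k, P i k * (D k ω - ∫ ω', D k ω' ∂μ)) ∂μ = 0 :=
    intLinZero _ (memCt (hB i).2) (fun k => memCt (hD k).2) (intCt (hB i).2)
      (fun k => intCt (hD k).2)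
  have hY0 : ∫ ω, ((C j ω - ∫ ω', C j ω' ∂μ)
      - ∑ l, Q j l * (D l ω - ∫ ω', D l ω' ∂μ)) ∂μ = 0 :=
    intLinZero _ (memCt (hC j).2) (fun l => memCt (hD l).2) (intCt (hC j).2)
      (fun l => intCt (hD l).2)
  -- matrix identities
  have h2 : ∑ l, Q j l * BD i l = (BD * W * DC) i j := by
    have hm : BD * Qᵀ = BD * W * DC := by
      rw [htr, ← Matrix.mul_assoc]
    rw [← hm, Matrix.mul_apply]
    exact Finset.sum_congr rfl fun l _ => by rw [Matrix.transpose_apply]; ring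
  have h3 : ∑ k, P i k * DC k j = (BD * W * DC) i j := by
    rw [hPdef, Matrix.mul_apply]
  have h4 : ∑ k, ∑ l, P i k * Q j l * V k l = (BD * W * DC) i j := by
    have haux : BD * W * V * W = BD * W := by
      rw [Matrix.mul_assoc BD W V, Matrix.mul_assoc BD (W * V) W, hWVW]
    have hm : P * (V * Qᵀ) = BD * W * DC := by
      rw [htr, hPdef, ← Matrix.mul_assoc, ← Matrix.mul_assoc, haux]
    rw [← hm, Matrix.mul_apply]
    refine Finset.sum_congr rfl fun k _ => ?_
    rw [Matrix.mul_apply, Finset.mul_sum]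
    exact Finset.sum_congr rfl fun l _ => by rw [Matrix.transpose_apply]; ring
  -- put things together
  show cov μ _ _ i j = _
  rw [Matrix.sub_apply]
  show (∫ ω, (B i ω - adjExp μ B D W i ω) * (C j ω - adjExp μ C D W j ω) ∂μ)
      - (∫ ω, (B i ω - adjExp μ B D W i ω) ∂μ)
        * (∫ ω, (C j ω - adjExp μ C D W j ω) ∂μ)
    = cov μ B C i j - (BD * W * DC) i j
  simp only [hXi, hYj]
  rw [hint, hX0, hY0, e0]
  simp_rw [e1, e2, e3]
  rw [h2, h3, h4]
  ring
end

section
/- Let B and D be random vectors, W the Moore–Penrose inverse of Var(D), and U the Moore–Penrose inverse of Var(B). Let A be a real m×m matrix with Var(B) = A·Aᵀ, and let A⁺ be the Moore–Penrose inverse of A. Then the expected size of the adjustment equals the trace of the belief transform: E[ Σ_i ( (A⁺·(E_D(B) − E[B]))_i )² ] = trace(T_D(B)), where E_D(B) − E[B] is the random vector with i-th component Σ_j (P_D(B))_{ij}·(D_j − E[D_j]). -/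
open MeasureTheory Matrix

variable {Ω : Type*}

section Aux

lemma mp_transpose {m n : ℕ} {V : Matrix (Fin m) (Fin n) ℝ} {W : Matrix (Fin n) (Fin m) ℝ}
    (h : IsMoorePenrose V W) : IsMoorePenrose Vᵀ Wᵀ := by
  obtain ⟨h1, h2, h3, h4⟩ := h
  refine ⟨?_, ?_, ?_, ?_⟩
  · calc Vᵀ * Wᵀ * Vᵀ = (V * W * V)ᵀ := by
          simp only [Matrix.transpose_mul, Matrix.mul_assoc]
      _ = Vᵀ := by rw [h1]
  · calc Wᵀ * Vᵀ * Wᵀ = (W * V * W)ᵀ := by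
          simp only [Matrix.transpose_mul, Matrix.mul_assoc]
      _ = Wᵀ := by rw [h2]
  · rw [← Matrix.transpose_mul, h4]; exact h4
  · rw [← Matrix.transpose_mul, h3]; exact h3

lemma mp_unique_s11 {m n : ℕ} {V : Matrix (Fin m) (Fin n) ℝ}
    {W1 W2 : Matrix (Fin n) (Fin m) ℝ}
    (h1 : IsMoorePenrose V W1) (h2 : IsMoorePenrose V W2) : W1 = W2 := by
  obtain ⟨a1, b1, c1, d1⟩ := h1
  obtain ⟨a2, b2, c2, d2⟩ := h2
  have hVW : V * W1 = V * W2 := by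
    calc V * W1 = (V * W1)ᵀ := c1.symm
    _ = W1ᵀ * Vᵀ := by rw [Matrix.transpose_mul]
    _ = W1ᵀ * (V * W2 * V)ᵀ := by rw [a2]
    _ = W1ᵀ * (Vᵀ * (V * W2)ᵀ) := by rw [Matrix.transpose_mul]
    _ = (V * W1)ᵀ * (V * W2) := by
        rw [c2, Matrix.transpose_mul, Matrix.mul_assoc]
    _ = V * W1 * (V * W2) := by rw [c1]
    _ = V * W2 := by rw [← Matrix.mul_assoc, a1]
  have hWV : W1 * V = W2 * V := by
    calc W1 * V = (W1 * V)ᵀ := d1.symm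
    _ = Vᵀ * W1ᵀ := by rw [Matrix.transpose_mul]
    _ = (V * W2 * V)ᵀ * W1ᵀ := by rw [a2]
    _ = (W2 * V)ᵀ * Vᵀ * W1ᵀ := by
        simp only [Matrix.transpose_mul, Matrix.mul_assoc]
    _ = W2 * V * (W1 * V)ᵀ := by rw [d2, Matrix.transpose_mul, Matrix.mul_assoc]
    _ = W2 * V * (W1 * V) := by rw [d1]
    _ = W2 * (V * W1 * V) := by simp only [Matrix.mul_assoc]
    _ = W2 * V := by rw [a1]
  calc W1 = W1 * V * W1 := b1.symm
  _ = W1 * (V * W2) := by rw [Matrix.mul_assoc, hVW]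
  _ = W2 * V * W2 := by rw [← Matrix.mul_assoc, hWV]
  _ = W2 := b2

lemma mp_AAT {m : ℕ} {A Ap : Matrix (Fin m) (Fin m) ℝ}
    (h : IsMoorePenrose A Ap) : IsMoorePenrose (A * Aᵀ) (Apᵀ * Ap) := by
  obtain ⟨h1, h2, h3, h4⟩ := h
  have key1 : Aᵀ * Apᵀ = Ap * A := by rw [← Matrix.transpose_mul, h4]
  have key2 : Apᵀ * Aᵀ = A * Ap := by rw [← Matrix.transpose_mul, h3]
  have keyT : Ap * A * Aᵀ = Aᵀ := by
    calc Ap * A * Aᵀ = (Ap * A)ᵀ * Aᵀ := by rw [h4]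
      _ = (A * (Ap * A))ᵀ := (Matrix.transpose_mul A (Ap * A)).symm
      _ = Aᵀ := by rw [← Matrix.mul_assoc, h1]
  have hVW : A * Aᵀ * (Apᵀ * Ap) = A * Ap := by
    calc A * Aᵀ * (Apᵀ * Ap) = A * (Aᵀ * Apᵀ) * Ap := by
          simp only [Matrix.mul_assoc]
      _ = A * Ap * A * Ap := by rw [key1]; simp only [Matrix.mul_assoc]
      _ = A * Ap := by rw [h1]
  have hWV : Apᵀ * Ap * (A * Aᵀ) = A * Ap := by
    calc Apᵀ * Ap * (A * Aᵀ) = Apᵀ * (Ap * A * Aᵀ) := by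
          simp only [Matrix.mul_assoc]
      _ = Apᵀ * Aᵀ := by rw [keyT]
      _ = A * Ap := key2
  refine ⟨?_, ?_, ?_, ?_⟩
  · rw [hVW, ← Matrix.mul_assoc, h1]
  · calc Apᵀ * Ap * (A * Aᵀ) * (Apᵀ * Ap) = Apᵀ * Ap * (A * Aᵀ * (Apᵀ * Ap)) := by
          simp only [Matrix.mul_assoc]
      _ = Apᵀ * Ap * (A * Ap) := by rw [hVW]
      _ = Apᵀ * (Ap * A * Ap) := by simp only [Matrix.mul_assoc]
      _ = Apᵀ * Ap := by rw [h2]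
  · rw [hVW]; exact h3
  · rw [hWV]; exact h3

lemma l2_mul_int [MeasurableSpace Ω] {μ : Measure Ω} {f g : Ω → ℝ}
    (hf : MemLp f 2 μ) (hg : MemLp g 2 μ) :
    Integrable (fun ω => f ω * g ω) μ := by
  have h : MemLp (f • g) 1 μ := hg.smul hf (hpqr := ⟨by rw [ENNReal.inv_two_add_inv_two, inv_one]⟩)
  have := memLp_one_iff_integrable.mp h
  simpa [Pi.smul_apply, smul_eq_mul, Pi.mul_def] using this

lemma cov_transpose [MeasurableSpace Ω] (μ : Measure Ω) {m n : ℕ}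
    (B : Fin m → Ω → ℝ) (D : Fin n → Ω → ℝ) : (cov μ B D)ᵀ = cov μ D B := by
  ext i j
  simp only [cov, Matrix.transpose_apply, Matrix.of_apply]
  rw [mul_comm (∫ ω, B j ω ∂μ)]
  congr 1
  simp_rw [mul_comm]

end Aux

/-- the expected size of the adjustment equals the trace of the belief
transform: `E[‖A⁺·(E_D(B) − E[B])‖²] = trace(T_D(B))`, where `Var(B) = A·Aᵀ`, `A⁺` is the
Moore–Penrose inverse of `A`, `W` is the Moore–Penrose inverse of `Var(D)`, `U` is the
Moore–Penrose inverse of `Var(B)`, and `T_D(B) = P_D(B)·P_B(D) = Cov(B,D)·W·Cov(D,B)·U`. -/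
theorem expected_size_eq_trace [MeasurableSpace Ω] (μ : Measure Ω) [IsProbabilityMeasure μ]
    {m n : ℕ} (B : Fin m → Ω → ℝ) (D : Fin n → Ω → ℝ)
    (hB : ∀ i, Measurable (B i) ∧ MemLp (B i) 2 μ)
    (hD : ∀ i, Measurable (D i) ∧ MemLp (D i) 2 μ)
    (W : Matrix (Fin n) (Fin n) ℝ) (hW : IsMoorePenrose (cov μ D D) W)
    (U : Matrix (Fin m) (Fin m) ℝ) (hU : IsMoorePenrose (cov μ B B) U)
    (A : Matrix (Fin m) (Fin m) ℝ) (hA : cov μ B B = A * Aᵀ)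
    (Aplus : Matrix (Fin m) (Fin m) ℝ) (hAplus : IsMoorePenrose A Aplus) :
    (∫ ω, ∑ i,
        (Aplus *ᵥ fun k => ∑ j, (cov μ B D * W) k j * (D j ω - ∫ ω', D j ω' ∂μ)) i ^ 2 ∂μ) =
      Matrix.trace (cov μ B D * W * (cov μ D B * U)) := by
  classical
  set P : Matrix (Fin m) (Fin n) ℝ := cov μ B D * W with hPdef
  set M : Matrix (Fin m) (Fin n) ℝ := Aplus * P with hMdef
  set V : Matrix (Fin n) (Fin n) ℝ := cov μ D D with hVdef
  have hVsym : Vᵀ = V := cov_transpose μ D D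
  have hWsym : Wᵀ = W := mp_unique_s11 (by rw [← hVsym]; exact mp_transpose hW) hW
  have hU' : U = Aplusᵀ * Aplus := mp_unique_s11 hU (by rw [hA]; exact mp_AAT hAplus)
  have hVjk : ∀ j k, V j k = V k j := by
    intro j k; nth_rewrite 1 [← hVsym]; rw [Matrix.transpose_apply]
  -- analytic facts
  have hXmem : ∀ j, MemLp (fun ω => D j ω - ∫ ω', D j ω' ∂μ) 2 μ :=
    fun j => (hD j).2.sub (memLp_const _)
  have hXX : ∀ j k, Integrable
      (fun ω => (D j ω - ∫ ω', D j ω' ∂μ) * (D k ω - ∫ ω', D k ω' ∂μ)) μ :=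
    fun j k => l2_mul_int (hXmem j) (hXmem k)
  have hDint : ∀ j, Integrable (D j) μ := fun j => (hD j).2.integrable one_le_two
  have hcovX : ∀ j k,
      (∫ ω, (D j ω - ∫ ω', D j ω' ∂μ) * (D k ω - ∫ ω', D k ω' ∂μ) ∂μ) = V j k := by
    intro j k
    have hprod : Integrable (fun ω => D j ω * D k ω) μ := l2_mul_int (hD j).2 (hD k).2
    have hrw : (fun ω => (D j ω - ∫ ω', D j ω' ∂μ) * (D k ω - ∫ ω', D k ω' ∂μ))
        = fun ω => D j ω * D k ω - (∫ ω', D k ω' ∂μ) * D j ω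
            - ((∫ ω', D j ω' ∂μ) * D k ω - (∫ ω', D j ω' ∂μ) * (∫ ω', D k ω' ∂μ)) := by
      funext ω; ring
    have i2 : Integrable (fun ω => (∫ ω', D k ω' ∂μ) * D j ω) μ := (hDint j).const_mul _
    have i3 : Integrable (fun ω => (∫ ω', D j ω' ∂μ) * D k ω) μ := (hDint k).const_mul _
    have i4 : Integrable (fun _ : Ω => (∫ ω', D j ω' ∂μ) * (∫ ω', D k ω' ∂μ)) μ :=
      integrable_const _
    have i1 : Integrable (fun ω => D j ω * D k ω - (∫ ω', D k ω' ∂μ) * D j ω) μ :=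
      hprod.sub i2
    have i5 : Integrable (fun ω => (∫ ω', D j ω' ∂μ) * D k ω
        - (∫ ω', D j ω' ∂μ) * (∫ ω', D k ω' ∂μ)) μ := i3.sub i4
    rw [hrw, integral_sub i1 i5, integral_sub hprod i2, integral_sub i3 i4,
      integral_const_mul, integral_const_mul, integral_const]
    simp only [hVdef, cov, Matrix.of_apply, measure_univ, probReal_univ, ENNReal.toReal_one, smul_eq_mul,
      one_mul, one_smul]
    ring
  have hvec : ∀ (ω : Ω) (i : Fin m),
      (Aplus *ᵥ fun k => ∑ j, P k j * (D j ω - ∫ ω', D j ω' ∂μ)) i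
        = ∑ j, M i j * (D j ω - ∫ ω', D j ω' ∂μ) := by
    intro ω i
    simp only [hMdef, Matrix.mulVec, dotProduct, Matrix.mul_apply,
      Finset.sum_mul, Finset.mul_sum]
    rw [Finset.sum_comm]
    exact Finset.sum_congr rfl fun j _ => Finset.sum_congr rfl fun k _ => by ring
  have step1 : (∫ ω, ∑ i,
        (Aplus *ᵥ fun k => ∑ j, P k j * (D j ω - ∫ ω', D j ω' ∂μ)) i ^ 2 ∂μ)
      = ∑ i, ∑ j, ∑ k, (M i j * M i k) *
          ((∫ ω, (D j ω - ∫ ω', D j ω' ∂μ) * (D k ω - ∫ ω', D k ω' ∂μ) ∂μ)) := by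
    calc (∫ ω, ∑ i,
        (Aplus *ᵥ fun k => ∑ j, P k j * (D j ω - ∫ ω', D j ω' ∂μ)) i ^ 2 ∂μ)
        = ∫ ω, ∑ i, ∑ j, ∑ k, (M i j * M i k) *
            ((D j ω - ∫ ω', D j ω' ∂μ) * (D k ω - ∫ ω', D k ω' ∂μ)) ∂μ := by
          apply integral_congr_ae
          filter_upwards with ω
          refine Finset.sum_congr rfl fun i _ => ?_
          rw [hvec ω i, sq, Finset.sum_mul_sum]
          exact Finset.sum_congr rfl fun j _ => Finset.sum_congr rfl fun k _ => by ring
      _ = ∑ i, ∑ j, ∑ k, (M i j * M i k) *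
            ((∫ ω, (D j ω - ∫ ω', D j ω' ∂μ) * (D k ω - ∫ ω', D k ω' ∂μ) ∂μ)) := by
          rw [integral_finset_sum _ (fun i _ => integrable_finset_sum _
            (fun j _ => integrable_finset_sum _ (fun k _ => (hXX j k).const_mul _)))]
          refine Finset.sum_congr rfl fun i _ => ?_
          rw [integral_finset_sum _
            (fun j _ => integrable_finset_sum _ (fun k _ => (hXX j k).const_mul _))]
          refine Finset.sum_congr rfl fun j _ => ?_
          rw [integral_finset_sum _ (fun k _ => (hXX j k).const_mul _)]
          exact Finset.sum_congr rfl fun k _ => integral_const_mul _ _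
  rw [step1]
  simp_rw [fun j k => hcovX j k]
  -- now pure linear algebra
  have htr : (∑ i, ∑ j, ∑ k, (M i j * M i k) * V j k) = Matrix.trace (Mᵀ * M * V) := by
    calc (∑ i, ∑ j, ∑ k, (M i j * M i k) * V j k)
        = ∑ j, ∑ i, ∑ k, (M i j * M i k) * V j k := Finset.sum_comm
      _ = ∑ j, ∑ k, ∑ i, (M i j * M i k) * V j k :=
          Finset.sum_congr rfl fun j _ => Finset.sum_comm
      _ = ∑ j, ∑ k, (∑ i, M i j * M i k) * V k j := by
          refine Finset.sum_congr rfl fun j _ => Finset.sum_congr rfl fun k _ => ?_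
          rw [Finset.sum_mul, hVjk j k]
      _ = Matrix.trace (Mᵀ * M * V) := by
          simp only [Matrix.trace, Matrix.diag, Matrix.mul_apply, Matrix.transpose_apply,
            Finset.sum_mul]
  rw [htr]
  have hPT : Pᵀ = W * cov μ D B := by
    rw [hPdef, Matrix.transpose_mul, hWsym, cov_transpose]
  have hPVP : P * V * Pᵀ = cov μ B D * W * cov μ D B := by
    calc P * V * Pᵀ = cov μ B D * (W * V * W) * cov μ D B := by
          rw [hPT, hPdef]; simp only [Matrix.mul_assoc]
      _ = cov μ B D * W * cov μ D B := by rw [hW.2.1]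
  calc Matrix.trace (Mᵀ * M * V)
      = Matrix.trace (Mᵀ * (M * V)) := by rw [Matrix.mul_assoc]
    _ = Matrix.trace ((M * V) * Mᵀ) := Matrix.trace_mul_comm _ _
    _ = Matrix.trace (Aplus * (P * V * Pᵀ * Aplusᵀ)) := by
        rw [hMdef]; simp only [Matrix.transpose_mul, Matrix.mul_assoc]
    _ = Matrix.trace (P * V * Pᵀ * Aplusᵀ * Aplus) := by
        rw [Matrix.trace_mul_comm, Matrix.mul_assoc]
    _ = Matrix.trace (P * (cov μ D B * U)) := by
        rw [hPVP, hU', hPdef]; simp only [Matrix.mul_assoc]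
end
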